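/- Fix q < 3 and define the two-sided sequence (q_n)_{n ∈ ℤ} by q₀ = q, q_{n+1} = z(q_n) for n ≥ 0, and q_{n−1} = z^{−1}(q_n) for n ≤ 0. Then for every integer n with 2 − n(q−1) ≠ 0, q_n = (2q + n(1−q)) / (2 + n(1−q)) = 1 + 2(q−1)/(2 − n(q−1)); equivalently, for q ≠ 1, 2/(1 − q_n) = 2/(1 − q) + n. Moreover q_n ≡ 1 for all n if q = 1, and q_n → 1 as n → ±∞ if q ≠ 1, and q_n > 1 for all n < 2/(q−1) when q ∈ (1, 3). -/

import Mathlib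

open MeasureTheory Filter Real Topology

/-- The `q`-exponential `e_q^x = [1 + (1-q)x]_+^{1/(1-q)}` (with `e_1^x = e^x`). -/
noncomputable def qExp (q x : ℝ) : ℝ :=
  if q = 1 then Real.exp x else (max (1 + (1 - q) * x) 0) ^ (1 / (1 - q))

/-- The `q`-exponential of a complex argument, via the principal power. -/
noncomputable def qExpC (q : ℝ) (w : ℂ) : ℂ :=
  if q = 1 then Complex.exp w else (1 + (1 - (q : ℂ)) * w) ^ ((1 : ℂ) / (1 - (q : ℂ)))

/-- The `q`-product on complex numbers, via principal powers. -/
noncomputable def qProdC (q : ℝ) (x y : ℂ) : ℂ :=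
  if q = 1 then x * y
  else (x ^ ((1 : ℂ) - (q : ℂ)) + y ^ ((1 : ℂ) - (q : ℂ)) - 1) ^ ((1 : ℂ) / (1 - (q : ℂ)))

/-- The normalizing constant `C_q = ∫ e_q^{-x²} dx`. -/
noncomputable def qC (q : ℝ) : ℝ := ∫ x : ℝ, qExp q (-x ^ 2)

/-- The `q`-Gaussian `G_q(β; x) = (√β / C_q) e_q^{-βx²}`. -/
noncomputable def qGaussian (q β x : ℝ) : ℝ := (Real.sqrt β / qC q) * qExp q (-(β * x ^ 2))

/-- The `q`-Fourier transform `F_q[f](ξ) = ∫ f(x) e_q^{i x ξ f(x)^{q-1}} dx`. -/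
noncomputable def qFourier (q : ℝ) (f : ℝ → ℝ) (ξ : ℝ) : ℂ :=
  ∫ x : ℝ, (f x : ℂ) * qExpC q (Complex.I * (x : ℂ) * (ξ : ℂ) * ((f x ^ (q - 1) : ℝ) : ℂ))

/-- The `q`-mean `μ_q(f) = ∫ x f(x)^q dx / ∫ f(x)^q dx`. -/
noncomputable def qMean (q : ℝ) (f : ℝ → ℝ) : ℝ :=
  (∫ x : ℝ, x * f x ^ q) / (∫ x : ℝ, f x ^ q)

/-- The `q`-variance `σ_q²(f) = ∫ (x-μ_q(f))² f(x)^q dx / ∫ f(x)^q dx`. -/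
noncomputable def qVar (q : ℝ) (f : ℝ → ℝ) : ℝ :=
  (∫ x : ℝ, (x - qMean q f) ^ 2 * f x ^ q) / (∫ x : ℝ, f x ^ q)

/-- Iterated `q`-product `w ⊗_q ⋯ ⊗_q w` (`N` factors). -/
noncomputable def qProdPow (q : ℝ) (w : ℂ) : ℕ → ℂ
  | 0 => 1
  | 1 => w
  | n + 2 => qProdC q w (qProdPow q w (n + 1))

/-- `z(s) = (1+s)/(3-s)`. -/
noncomputable def zmap (s : ℝ) : ℝ := (1 + s) / (3 - s)

/-- The inverse of `z`: `z⁻¹(t) = (3t-1)/(1+t)`. -/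
noncomputable def zinvmap (t : ℝ) : ℝ := (3 * t - 1) / (1 + t)

lemma qseq_up (q : ℝ) (Q : ℤ → ℝ) (hQ0 : Q 0 = q)
    (hup : ∀ n : ℤ, 0 ≤ n → Q (n + 1) = zmap (Q n)) :
    ∀ n : ℤ, 0 ≤ n → (∀ m : ℤ, 0 ≤ m → m ≤ n → 2 + (m : ℝ) * (1 - q) ≠ 0) →
      Q n = (2 * q + (n : ℝ) * (1 - q)) / (2 + (n : ℝ) * (1 - q)) := by
  intro n hn
  refine Int.le_induction (motive := fun n _ => (∀ m : ℤ, 0 ≤ m → m ≤ n → 2 + (m : ℝ) * (1 - q) ≠ 0) →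
      Q n = (2 * q + (n : ℝ) * (1 - q)) / (2 + (n : ℝ) * (1 - q))) ?_ ?_ n hn
  · intro _; norm_num [hQ0]
  · intro n hn ih hm
    have hD : (2 + (n:ℝ)*(1-q)) ≠ 0 := hm n hn (by omega)
    have hD1 : (2 + ((n:ℝ)+1)*(1-q)) ≠ 0 := by
      have := hm (n+1) (by omega) le_rfl
      push_cast at this
      exact this
    rw [hup n hn, ih (fun m h1 h2 => hm m h1 (by omega)), zmap]
    push_cast
    have h1 : 1 + (2*q + (n:ℝ)*(1-q))/(2+(n:ℝ)*(1-q))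
        = 2*(2*q + ((n:ℝ)+1)*(1-q))/(2+(n:ℝ)*(1-q)) := by field_simp; ring
    have h3 : 3 - (2*q + (n:ℝ)*(1-q))/(2+(n:ℝ)*(1-q))
        = 2*(2 + ((n:ℝ)+1)*(1-q))/(2+(n:ℝ)*(1-q)) := by field_simp; ring
    rw [h1, h3, div_div_div_cancel_right₀ hD, mul_div_mul_left _ _ (two_ne_zero)]

lemma qseq_down (q : ℝ) (Q : ℤ → ℝ) (hQ0 : Q 0 = q)
    (hdown : ∀ n : ℤ, n ≤ 0 → Q (n - 1) = zinvmap (Q n)) :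
    ∀ n : ℤ, n ≤ 0 → (∀ m : ℤ, n ≤ m → m ≤ 0 → 2 + (m : ℝ) * (1 - q) ≠ 0) →
      Q n = (2 * q + (n : ℝ) * (1 - q)) / (2 + (n : ℝ) * (1 - q)) := by
  intro n hn
  refine Int.le_induction_down (motive := fun n _ => (∀ m : ℤ, n ≤ m → m ≤ 0 → 2 + (m : ℝ) * (1 - q) ≠ 0) →
      Q n = (2 * q + (n : ℝ) * (1 - q)) / (2 + (n : ℝ) * (1 - q))) ?_ ?_ n hn
  · intro _; norm_num [hQ0]
  · intro n hn ih hm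
    have hD : (2 + (n:ℝ)*(1-q)) ≠ 0 := hm n (by omega) hn
    have hD1 : (2 + ((n:ℝ)-1)*(1-q)) ≠ 0 := by
      have := hm (n-1) le_rfl (by omega)
      push_cast at this
      exact this
    rw [hdown n hn, ih (fun m h1 h2 => hm m (by omega) h2), zinvmap]
    push_cast
    have h1 : 3 * ((2*q + (n:ℝ)*(1-q))/(2+(n:ℝ)*(1-q))) - 1
        = 2*(2*q + ((n:ℝ)-1)*(1-q))/(2+(n:ℝ)*(1-q)) := by field_simp; ring
    have h3 : 1 + (2*q + (n:ℝ)*(1-q))/(2+(n:ℝ)*(1-q))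
        = 2*(2 + ((n:ℝ)-1)*(1-q))/(2+(n:ℝ)*(1-q)) := by field_simp; ring
    rw [h1, h3, div_div_div_cancel_right₀ hD, mul_div_mul_left _ _ (two_ne_zero)]

lemma qseq_inv_tendsto_atBot {α : Type*} {l : Filter α} {f : α → ℝ} (h : Tendsto f l atBot) :
    Tendsto (fun x => (f x)⁻¹) l (nhds 0) := by
  have h2 : Tendsto (fun x => (-f x)⁻¹) l (nhds 0) :=
    Tendsto.inv_tendsto_atTop (tendsto_neg_atBot_atTop.comp h)
  have e : (fun x => (f x)⁻¹) = fun x => -(-f x)⁻¹ := by funext x; rw [inv_neg, neg_neg]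
  rw [e]
  simpa using h2.neg

lemma qseq_aux_tendsto (c : ℝ) (hc : c ≠ 0) :
    Tendsto (fun n : ℤ => (2 - (n:ℝ)*c)⁻¹) atTop (nhds 0) ∧
    Tendsto (fun n : ℤ => (2 - (n:ℝ)*c)⁻¹) atBot (nhds 0) := by
  have hT : Tendsto ((↑) : ℤ → ℝ) atTop atTop := tendsto_intCast_atTop_atTop
  have hB : Tendsto ((↑) : ℤ → ℝ) atBot atBot := tendsto_intCast_atBot_iff.2 tendsto_id
  have e : (fun n : ℤ => 2 - (n:ℝ)*c) = fun n : ℤ => (n:ℝ)*(-c) + 2 := by funext n; ring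
  rcases hc.lt_or_gt with h | h
  · constructor
    · apply Tendsto.inv_tendsto_atTop
      rw [e]; exact tendsto_atTop_add_const_right _ _ (hT.atTop_mul_const (by linarith))
    · apply qseq_inv_tendsto_atBot
      rw [e]; exact tendsto_atBot_add_const_right _ _ (hB.atBot_mul_const (by linarith))
  · constructor
    · apply qseq_inv_tendsto_atBot
      rw [e]; exact tendsto_atBot_add_const_right _ _ (hT.atTop_mul_const_of_neg (by linarith))
    · apply Tendsto.inv_tendsto_atTop
      rw [e]; exact tendsto_atTop_add_const_right _ _ (hB.atBot_mul_const_of_neg (by linarith))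

/-- The two-sided sequence `q₀ = q`, `q_{n+1} = z(q_n)` (`n ≥ 0`), `q_{n-1} = z⁻¹(q_n)`
(`n ≤ 0`) satisfies, wherever all intermediate denominators are nonzero,
`q_n = (2q + n(1-q))/(2 + n(1-q)) = 1 + 2(q-1)/(2 - n(q-1))`; equivalently, for `q ≠ 1`,
`2/(1-q_n) = 2/(1-q) + n`. Moreover `q_n ≡ 1` if `q = 1`; `q_n → 1` as `n → ±∞` if
`q ≠ 1`; and `q_n > 1` for all `n < 2/(q-1)` when `q ∈ (1,3)`. -/
theorem qseq_closed_form (q : ℝ) (hq : q < 3) (Q : ℤ → ℝ)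
    (hQ0 : Q 0 = q)
    (hup : ∀ n : ℤ, 0 ≤ n → Q (n + 1) = zmap (Q n))
    (hdown : ∀ n : ℤ, n ≤ 0 → Q (n - 1) = zinvmap (Q n)) :
    (∀ n : ℤ, (∀ m : ℤ, m ∈ Set.uIcc 0 n → 2 - (m : ℝ) * (q - 1) ≠ 0) →
      Q n = (2 * q + (n : ℝ) * (1 - q)) / (2 + (n : ℝ) * (1 - q)) ∧
        Q n = 1 + 2 * (q - 1) / (2 - (n : ℝ) * (q - 1))) ∧
    (q ≠ 1 → ∀ n : ℤ, (∀ m : ℤ, m ∈ Set.uIcc 0 n → 2 - (m : ℝ) * (q - 1) ≠ 0) →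
      2 / (1 - Q n) = 2 / (1 - q) + (n : ℝ)) ∧
    (q = 1 → ∀ n : ℤ, Q n = 1) ∧
    (q ≠ 1 → (∀ n : ℤ, 2 - (n : ℝ) * (q - 1) ≠ 0) →
      Tendsto (fun n : ℤ => Q n) atTop (nhds 1) ∧
        Tendsto (fun n : ℤ => Q n) atBot (nhds 1)) ∧
    (1 < q → ∀ n : ℤ, (n : ℝ) < 2 / (q - 1) → 1 < Q n) := by
  have key : ∀ n : ℤ, (∀ m : ℤ, m ∈ Set.uIcc 0 n → 2 - (m : ℝ) * (q - 1) ≠ 0) →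
      Q n = (2 * q + (n : ℝ) * (1 - q)) / (2 + (n : ℝ) * (1 - q)) := by
    intro n hden
    have hden' : ∀ m : ℤ, m ∈ Set.uIcc 0 n → 2 + (m:ℝ)*(1-q) ≠ 0 := by
      intro m hm h
      exact hden m hm (by linarith)
    rcases le_total 0 n with h | h
    · exact qseq_up q Q hQ0 hup n h
        (fun m h1 h2 => hden' m (by simp only [Set.mem_uIcc]; omega))
    · exact qseq_down q Q hQ0 hdown n h
        (fun m h1 h2 => hden' m (by simp only [Set.mem_uIcc]; omega))
  have key2 : ∀ n : ℤ, (∀ m : ℤ, m ∈ Set.uIcc 0 n → 2 - (m : ℝ) * (q - 1) ≠ 0) →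
      Q n = 1 + 2 * (q - 1) / (2 - (n : ℝ) * (q - 1)) := by
    intro n hden
    have hDn : 2 - (n:ℝ)*(q-1) ≠ 0 := hden n Set.right_mem_uIcc
    have hDn' : 2 + (n:ℝ)*(1-q) ≠ 0 := by intro h; exact hDn (by linarith)
    rw [key n hden]
    field_simp
    ring
  refine ⟨fun n hd => ⟨key n hd, key2 n hd⟩, ?_, ?_, ?_, ?_⟩
  · -- part 2
    intro hq1 n hd
    have hDn : 2 - (n:ℝ)*(q-1) ≠ 0 := hd n Set.right_mem_uIcc
    have h1q : 1 - q ≠ 0 := fun h => hq1 (by linarith)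
    rw [key2 n hd]
    have e : 1 - (1 + 2 * (q - 1) / (2 - (n : ℝ) * (q - 1)))
        = 2*(1-q) / (2 - (n : ℝ) * (q - 1)) := by field_simp; ring
    rw [e, div_div_eq_mul_div]
    field_simp
    ring
  · -- part 3
    intro h1
    subst h1
    have z1 : zmap 1 = 1 := by norm_num [zmap]
    have zi1 : zinvmap 1 = 1 := by norm_num [zinvmap]
    have up1 : ∀ n : ℤ, 0 ≤ n → Q n = 1 := by
      intro n hn
      refine Int.le_induction (motive := fun n _ => Q n = 1) hQ0 ?_ n hn
      intro k hk ih
      rw [hup k hk, ih, z1]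
    have down1 : ∀ n : ℤ, n ≤ 0 → Q n = 1 := by
      intro n hn
      refine Int.le_induction_down (motive := fun n _ => Q n = 1) hQ0 ?_ n hn
      intro k hk ih
      rw [hdown k hk, ih, zi1]
    intro n
    rcases le_total 0 n with h | h
    · exact up1 n h
    · exact down1 n h
  · -- part 4
    intro hq1 hall
    have hc : q - 1 ≠ 0 := sub_ne_zero.mpr hq1
    have hQeq : ∀ n : ℤ, Q n = 1 + 2*(q-1) * (2 - (n:ℝ)*(q-1))⁻¹ := by
      intro n
      rw [key2 n (fun m _ => hall m), div_eq_mul_inv]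
    obtain ⟨hT, hB⟩ := qseq_aux_tendsto (q-1) hc
    constructor
    · refine Tendsto.congr (fun n => (hQeq n).symm) ?_
      have h1 : Tendsto (fun n : ℤ => 1 + 2*(q-1) * (2 - (n:ℝ)*(q-1))⁻¹) atTop
          (nhds (1 + 2*(q-1)*0)) := tendsto_const_nhds.add (tendsto_const_nhds.mul hT)
      simpa using h1
    · refine Tendsto.congr (fun n => (hQeq n).symm) ?_
      have h1 : Tendsto (fun n : ℤ => 1 + 2*(q-1) * (2 - (n:ℝ)*(q-1))⁻¹) atBot
          (nhds (1 + 2*(q-1)*0)) := tendsto_const_nhds.add (tendsto_const_nhds.mul hB)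
      simpa using h1
  · -- part 5
    intro hq1 n hn
    have hc : 0 < q - 1 := by linarith
    have hn2 : (n:ℝ) * (q-1) < 2 := (lt_div_iff₀ hc).1 hn
    have hd : ∀ m : ℤ, m ∈ Set.uIcc 0 n → 2 - (m:ℝ)*(q-1) ≠ 0 := by
      intro m hm
      rw [Set.mem_uIcc] at hm
      have hpos : 0 < 2 - (m:ℝ)*(q-1) := by
        rcases hm with ⟨h1, h2⟩ | ⟨h1, h2⟩
        · have hmn : (m:ℝ) ≤ (n:ℝ) := by exact_mod_cast h2
          nlinarith
        · have hm0 : (m:ℝ) ≤ 0 := by exact_mod_cast h2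
          nlinarith
      exact hpos.ne'
    have hDpos : 0 < 2 - (n:ℝ)*(q-1) := by linarith
    rw [key2 n hd]
    have : 0 < 2 * (q-1) / (2 - (n:ℝ)*(q-1)) := div_pos (by linarith) hDpos
    linarith
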